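/- Let G be a group acting on a countable set X with the property that for every pair x, z ∈ X there are, for each n, random equivalence relations Rₙ on X that are G-equivariant in distribution, have almost surely finite equivalence classes, and satisfy P[(x,z) ∈ Rₙ] → 1. Fix o ∈ X and define means Mₙ on ℓ^∞(X) by Mₙ(f) = E[ (1/|Cₙ(o)|) Σ_{x ∈ Cₙ(o)} f(x) ], where Cₙ(o) is the Rₙ-class of o. Then for every g ∈ G and f ∈ ℓ^∞(X), |Mₙ(L_g f) − Mₙ(f)| ≤ 2‖f‖_∞ · P[(o, g·o) ∉ Rₙ], where L_g f(x) = f(g·x). -/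

import Mathlib

open MeasureTheory
open scoped Classical

private lemma avg_abs_le {X : Type*} (f : X → ℝ) {C : ℝ} (hC0 : 0 ≤ C)
    (hC : ∀ x, |f x| ≤ C) (s : Finset X) :
    |(∑ x ∈ s, f x) / (s.card : ℝ)| ≤ C := by
  rcases s.eq_empty_or_nonempty with rfl | hs
  · simpa using hC0
  · rw [abs_div, abs_of_nonneg (by positivity : (0:ℝ) ≤ (s.card : ℝ)),
      div_le_iff₀ (by exact_mod_cast hs.card_pos)]
    calc |∑ x ∈ s, f x| ≤ ∑ x ∈ s, |f x| := Finset.abs_sum_le_sum_abs _ _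
      _ ≤ ∑ x ∈ s, C := Finset.sum_le_sum fun x _ => hC x
      _ = C * s.card := by rw [Finset.sum_const, nsmul_eq_mul, mul_comm]

private lemma meas_avg {X : Type*} [Countable X] {Ω : Type*} [MeasurableSpace Ω]
    (Rel : Ω → X → Prop) (hmeas : ∀ z : X, MeasurableSet {ω | Rel ω z}) (f : X → ℝ) :
    Measurable (fun ω => if h : {z | Rel ω z}.Finite then
        (∑ x ∈ h.toFinset, f x) / (h.toFinset.card : ℝ) else 0) := by
  letI : MeasurableSpace (Option (Finset X)) := ⊤
  have Mset : ∀ s : Finset X, MeasurableSet {ω | {z | Rel ω z} = ↑s} := by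
    intro s
    have hrw : {ω | {z | Rel ω z} = ↑s} = ⋂ z : X,
        (if z ∈ s then {ω | Rel ω z} else {ω | Rel ω z}ᶜ) := by
      ext ω
      simp only [Set.mem_setOf_eq, Set.mem_iInter, Set.ext_iff, Finset.coe_sort_coe,
        Finset.mem_coe]
      constructor
      · intro h z
        by_cases hz : z ∈ s
        · simpa [hz] using (h z).mpr hz
        · simpa [hz] using fun hr => hz ((h z).mp hr)
      · intro h z
        have hmem := h z
        by_cases hz : z ∈ s
        · simp only [hz, if_true, Set.mem_setOf_eq] at hmem
          simp [hz, hmem]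
        · simp only [hz, if_false, Set.mem_compl_iff, Set.mem_setOf_eq] at hmem
          simp [hz, hmem]
    rw [hrw]
    exact MeasurableSet.iInter fun z => by
      by_cases hz : z ∈ s <;> simp only [hz, if_true, if_false]
      · exact hmeas z
      · exact (hmeas z).compl
  set T : Ω → Option (Finset X) := fun ω =>
    if h : {z | Rel ω z}.Finite then some h.toFinset else none with hT
  have hTsome : ∀ s : Finset X, T ⁻¹' {some s} = {ω | {z | Rel ω z} = ↑s} := by
    intro s
    ext ω
    simp only [Set.mem_preimage, Set.mem_singleton_iff, Set.mem_setOf_eq, hT]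
    by_cases h : {z | Rel ω z}.Finite
    · simp only [h, dif_pos, Option.some.injEq]
      constructor
      · rintro rfl; exact h.coe_toFinset.symm
      · intro he; apply Finset.coe_injective; rw [h.coe_toFinset, he]
    · simp only [h, dif_neg, not_false_iff]
      constructor
      · intro hc; exact absurd hc (by simp)
      · intro he; exact absurd (he ▸ s.finite_toSet) h
  have hTnone : T ⁻¹' {none} = (⋃ s : Finset X, {ω | {z | Rel ω z} = ↑s})ᶜ := by
    ext ω
    simp only [Set.mem_preimage, Set.mem_singleton_iff, Set.mem_compl_iff, Set.mem_iUnion,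
      Set.mem_setOf_eq, hT]
    by_cases h : {z | Rel ω z}.Finite
    · simp only [h, dif_pos]
      constructor
      · intro hc; exact absurd hc (by simp)
      · intro hc; exact absurd ⟨h.toFinset, h.coe_toFinset.symm⟩ hc
    · simp only [h, dif_neg, not_false_iff, true_iff]
      rintro ⟨s, hs⟩; exact h (hs ▸ s.finite_toSet)
  have hTm : Measurable T := by
    apply measurable_to_countable
    intro ω
    rcases hω : T ω with _ | s
    · rw [hTnone]
      exact (MeasurableSet.iUnion fun s => Mset s).compl
    · rw [hTsome]; exact Mset s
  have hfeq : (fun ω => if h : {z | Rel ω z}.Finite then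
      (∑ x ∈ h.toFinset, f x) / (h.toFinset.card : ℝ) else 0)
      = (fun t : Option (Finset X) => t.elim 0 (fun s => (∑ x ∈ s, f x) / (s.card : ℝ))) ∘ T := by
    funext ω
    simp only [Function.comp_apply, hT]
    by_cases h : {z | Rel ω z}.Finite <;> simp [h]
  rw [hfeq]
  exact (measurable_from_top).comp hTm

/-- The key estimate in the Adams–Lyons amenability criterion: with
`Mₙ f = E[|Cₙ(o)|⁻¹ ∑_{x ∈ Cₙ(o)} f(x)]`, one has
`|Mₙ(L_g f) − Mₙ(f)| ≤ 2‖f‖_∞ P[(o, g·o) ∉ Rₙ]`. -/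
theorem stmt_10 {G X : Type*} [Group G] [Countable X] [MulAction G X]
    {Ω : Type*} [MeasurableSpace Ω] (P : Measure Ω) [IsProbabilityMeasure P]
    [MulAction G Ω]
    (hmp : ∀ g : G, MeasurePreserving (fun ω => g • ω) P P)
    (R : ℕ → Ω → X → X → Prop)
    (hmeas : ∀ (n : ℕ) (x z : X), MeasurableSet {ω | R n ω x z})
    (heqv : ∀ (n : ℕ) (g : G) (ω : Ω) (x₁ x₂ : X),
      R n ω x₁ x₂ ↔ R n (g • ω) (g • x₁) (g • x₂))
    (heq : ∀ (n : ℕ) (ω : Ω), Equivalence (R n ω))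
    (hfin : ∀ (n : ℕ) (x : X), ∀ᵐ ω ∂P, {z | R n ω x z}.Finite)
    (o : X) (n : ℕ) (g : G) (f : X → ℝ) (C : ℝ) (hC : ∀ x, |f x| ≤ C) :
    |(∫ ω, (if h : {z | R n ω o z}.Finite then
          (∑ x ∈ h.toFinset, f (g • x)) / (h.toFinset.card : ℝ) else 0) ∂P) -
      (∫ ω, (if h : {z | R n ω o z}.Finite then
          (∑ x ∈ h.toFinset, f x) / (h.toFinset.card : ℝ) else 0) ∂P)| ≤
      2 * C * (P {ω | ¬ R n ω o (g • o)}).toReal := by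
  have hC0 : 0 ≤ C := le_trans (abs_nonneg _) (hC o)
  set F₁ : Ω → ℝ := fun ω => if h : {z | R n ω o z}.Finite then
      (∑ x ∈ h.toFinset, f (g • x)) / (h.toFinset.card : ℝ) else 0 with hF₁def
  set F₂ : Ω → ℝ := fun ω => if h : {z | R n ω o z}.Finite then
      (∑ x ∈ h.toFinset, f x) / (h.toFinset.card : ℝ) else 0 with hF₂def
  set H : Ω → ℝ := fun ω => if h : {z | R n ω (g • o) z}.Finite then
      (∑ x ∈ h.toFinset, f x) / (h.toFinset.card : ℝ) else 0 with hHdef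
  have hHm : Measurable H := meas_avg _ (fun z => hmeas n (g • o) z) f
  have hF₂m : Measurable F₂ := meas_avg _ (fun z => hmeas n o z) f
  -- Step 1: F₁ ω = H (g • ω)
  have key : ∀ ω, F₁ ω = H (g • ω) := by
    intro ω
    have himg : {z | R n (g • ω) (g • o) z} = (fun x => g • x) '' {z | R n ω o z} := by
      ext z
      constructor
      · intro hz
        refine ⟨g⁻¹ • z, ?_, by simp⟩
        have := (heqv n g ω o (g⁻¹ • z)).mpr
        simp only [Set.mem_setOf_eq]
        apply this
        simpa using hz
      · rintro ⟨x, hx, rfl⟩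
        exact (heqv n g ω o x).mp hx
    simp only [hF₁def, hHdef]
    by_cases h : {z | R n ω o z}.Finite
    · have h' : {z | R n (g • ω) (g • o) z}.Finite := himg ▸ h.image _
      have hts : h'.toFinset = h.toFinset.image (fun x => g • x) := by
        ext z
        simp only [Set.Finite.mem_toFinset, Finset.mem_image, Set.Finite.mem_toFinset, himg]
        simp [Set.mem_image]
      rw [dif_pos h, dif_pos h', hts,
        Finset.sum_image (fun a _ b _ hab => MulAction.injective g hab),
        Finset.card_image_of_injective _ (MulAction.injective g)]
    · have h' : ¬ {z | R n (g • ω) (g • o) z}.Finite := by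
        rw [himg]
        intro hc
        exact h (Set.Finite.of_finite_image hc (MulAction.injective g).injOn)
      rw [dif_neg h, dif_neg h']
  -- Step 2: change of variables
  let e : Ω ≃ᵐ Ω :=
    { toEquiv := MulAction.toPerm g
      measurable_toFun := (hmp g).measurable
      measurable_invFun := (hmp g⁻¹).measurable }
  have hint1 : ∫ ω, F₁ ω ∂P = ∫ ω, H ω ∂P := by
    calc ∫ ω, F₁ ω ∂P = ∫ ω, H (g • ω) ∂P := by simp_rw [key]
      _ = ∫ ω, H ω ∂P := (hmp g).integral_comp e.measurableEmbedding H
  -- boundedness & integrability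
  have hbH : ∀ ω, |H ω| ≤ C := by
    intro ω
    simp only [hHdef]
    split_ifs with h
    · exact avg_abs_le f hC0 hC _
    · simpa using hC0
  have hbF₂ : ∀ ω, |F₂ ω| ≤ C := by
    intro ω
    simp only [hF₂def]
    split_ifs with h
    · exact avg_abs_le f hC0 hC _
    · simpa using hC0
  have intH : Integrable H P :=
    Integrable.mono' (integrable_const C) hHm.aestronglyMeasurable
      (ae_of_all _ fun ω => by simpa [Real.norm_eq_abs] using hbH ω)
  have intF₂ : Integrable F₂ P :=
    Integrable.mono' (integrable_const C) hF₂m.aestronglyMeasurable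
      (ae_of_all _ fun ω => by simpa [Real.norm_eq_abs] using hbF₂ ω)
  have hbadm : MeasurableSet {ω | ¬ R n ω o (g • o)} := by
    have : {ω | ¬ R n ω o (g • o)} = {ω | R n ω o (g • o)}ᶜ := rfl
    rw [this]; exact (hmeas n o (g • o)).compl
  -- pointwise estimate
  have hpt : ∀ ω, |H ω - F₂ ω| ≤
      Set.indicator {ω | ¬ R n ω o (g • o)} (fun _ => 2 * C) ω := by
    intro ω
    by_cases hω : R n ω o (g • o)
    · have hcl : {z | R n ω (g • o) z} = {z | R n ω o z} := by
        ext z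
        exact ⟨fun hz => (heq n ω).trans hω hz,
          fun hz => (heq n ω).trans ((heq n ω).symm hω) hz⟩
      have hHF : H ω = F₂ ω := by
        simp only [hHdef, hF₂def]
        by_cases h : {z | R n ω o z}.Finite
        · have h' : {z | R n ω (g • o) z}.Finite := hcl ▸ h
          have hts : h'.toFinset = h.toFinset := by
            ext z; simp [Set.Finite.mem_toFinset, hcl]
          rw [dif_pos h, dif_pos h', hts]
        · have h' : ¬ {z | R n ω (g • o) z}.Finite := hcl ▸ h
          rw [dif_neg h, dif_neg h']
      rw [hHF, sub_self, abs_zero]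
      exact Set.indicator_nonneg (fun _ _ => by positivity) ω
    · rw [Set.indicator_of_mem (by exact hω)]
      calc |H ω - F₂ ω| ≤ |H ω| + |F₂ ω| := abs_sub _ _
        _ ≤ C + C := add_le_add (hbH ω) (hbF₂ ω)
        _ = 2 * C := by ring
  -- conclude
  rw [hint1, ← integral_sub intH intF₂]
  have intInd : Integrable (Set.indicator {ω | ¬ R n ω o (g • o)} (fun _ => 2 * C)) P :=
    (integrable_const (2 * C)).indicator hbadm
  calc |∫ ω, (H ω - F₂ ω) ∂P| ≤ ∫ ω, |H ω - F₂ ω| ∂P := by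
        simpa [Real.norm_eq_abs] using
          norm_integral_le_integral_norm (fun ω => H ω - F₂ ω) (μ := P)
    _ ≤ ∫ ω, Set.indicator {ω | ¬ R n ω o (g • o)} (fun _ => 2 * C) ω ∂P :=
        integral_mono (intH.sub intF₂).abs intInd hpt
    _ = (P {ω | ¬ R n ω o (g • o)}).toReal * (2 * C) := by
        rw [integral_indicator_const _ hbadm, smul_eq_mul]; rfl
    _ = 2 * C * (P {ω | ¬ R n ω o (g • o)}).toReal := by ring
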